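/- Let N ≥ 3, let Q be an N×N real matrix, Φ ∈ ℝ^{N²×m}, p₀, p ∈ ℝ^{N²}, and suppose: (i) Δ(Q)Φ has full column rank (so ΦᵀΔ(Q)ᵀΔ(Q)Φ is invertible); (ii) p = p₀ + Φβ* for some β* ∈ ℝ^m; (iii) Δ(Q)p = 0. Then [I − Φ(ΦᵀΔ(Q)ᵀΔ(Q)Φ)⁻¹ΦᵀΔ(Q)ᵀΔ(Q)] p₀ = p. (At the true transition matrix Q of the observed chain, the estimation formula recovers the true vectorized kernel p exactly; this is the deterministic core of the consistency of p̂.) -/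

import Mathlib

open Matrix Kronecker

/-- `Δ(A) = I ⊗ A − Aᵀ ⊗ I`. -/
noncomputable def Delta {N : ℕ} (A : Matrix (Fin N) (Fin N) ℝ) :
    Matrix (Fin N × Fin N) (Fin N × Fin N) ℝ :=
  (1 : Matrix (Fin N) (Fin N) ℝ) ⊗ₖ A - Aᵀ ⊗ₖ (1 : Matrix (Fin N) (Fin N) ℝ)

private lemma gram_posDef {k n : Type*} [Fintype k] [Fintype n] [DecidableEq n]
    (A : Matrix k n ℝ) (h : Function.Injective A.mulVec) : (Aᵀ * A).PosDef := by
  refine PosDef.of_dotProduct_mulVec_pos (isHermitian_conjTranspose_mul_self A) fun x hx => ?_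
  have hAx : A *ᵥ x ≠ 0 := by
    intro h0
    exact hx (h (by simpa using h0))
  have key : star x ⬝ᵥ (Aᵀ * A) *ᵥ x = (A *ᵥ x) ⬝ᵥ (A *ᵥ x) := by
    rw [show (star x : n → ℝ) = x from rfl, ← mulVec_mulVec, dotProduct_mulVec,
      vecMul_transpose]
  rw [key]
  rcases lt_or_eq_of_le (Finset.sum_nonneg fun i _ => mul_self_nonneg ((A *ᵥ x) i)) with h' | h'
  · exact h'
  · exact absurd (dotProduct_self_eq_zero.mp h'.symm) hAx

/-- If `Δ(Q)Φ` has full column rank, `p = p₀ + Φβ*` for some `β*` and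
`Δ(Q)p = 0`, then `[I − Φ(ΦᵀΔ(Q)ᵀΔ(Q)Φ)⁻¹ΦᵀΔ(Q)ᵀΔ(Q)] p₀ = p`. -/
theorem stmt_12 (N m : ℕ) (hN : 3 ≤ N) (Q : Matrix (Fin N) (Fin N) ℝ)
    (Φ : Matrix (Fin N × Fin N) (Fin m) ℝ) (p₀ p : Fin N × Fin N → ℝ)
    (hrank : Function.Injective fun x : Fin m → ℝ => (Delta Q * Φ).mulVec x)
    (hβ : ∃ β : Fin m → ℝ, p = p₀ + Φ.mulVec β)
    (hker : (Delta Q).mulVec p = 0) :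
    ((1 : Matrix (Fin N × Fin N) (Fin N × Fin N) ℝ)
        - Φ * (Φᵀ * (Delta Q)ᵀ * Delta Q * Φ)⁻¹
            * (Φᵀ * (Delta Q)ᵀ * Delta Q)).mulVec p₀ = p := by
  obtain ⟨β, rfl⟩ := hβ
  set D := Delta Q with hD
  set M := Φᵀ * Dᵀ * D * Φ with hM
  have hM' : M = (D * Φ)ᵀ * (D * Φ) := by
    rw [hM, transpose_mul, Matrix.mul_assoc, Matrix.mul_assoc]
  have hMpd : M.PosDef := hM' ▸ gram_posDef (D * Φ) hrank
  have hMu : IsUnit M := hMpd.isUnit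
  have hinv : M⁻¹ * M = 1 := nonsing_inv_mul M ((isUnit_iff_isUnit_det M).mp hMu)
  -- D *ᵥ p₀ = -(D * Φ) *ᵥ β
  have h1 : D *ᵥ p₀ = -((D * Φ) *ᵥ β) := by
    have h := hker
    rw [mulVec_add] at h
    rw [← mulVec_mulVec]
    exact eq_neg_of_add_eq_zero_left h
  have h2 : (Φᵀ * Dᵀ * D) *ᵥ p₀ = -(M *ᵥ β) := by
    rw [← mulVec_mulVec, h1, mulVec_neg, mulVec_mulVec, hM, Matrix.mul_assoc (Φᵀ * Dᵀ) D Φ]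
  rw [sub_mulVec, one_mulVec, ← mulVec_mulVec, ← mulVec_mulVec, h2, mulVec_neg,
    mulVec_mulVec, hinv, one_mulVec, mulVec_neg, sub_neg_eq_add]
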